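/- Let K, K' ≥ 0, a ∈ (0,1/2), and h, k ∈ H. Let Φ : [0,∞) → L(H) be a family of bounded linear operators on H with ‖Φ(s)‖ ≤ K for all s, and let g : (0,∞) → H be continuous with ‖g(s)‖ ≤ K' (1 + s^{-a}) ‖h‖ ‖k‖ for all s > 0. Let ξ : [0,∞) → H be continuous with ξ(0) = 0, s ↦ Φ(s)(ξ(s)) continuous, and ξ(t) = ∫₀^t S(t−s) (Φ(s)(ξ(s)) + g(s)) ds for all t ≥ 0. Then for every T > 0 there exists a constant C (depending only on T, a, K, K' and λ₀) such that ‖ξ(t)‖ ≤ C ‖h‖ ‖k‖ for all t ∈ [0,T]. -/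

import Mathlib

open Real MeasureTheory Set Filter
open scoped ENNReal Topology

noncomputable section

/-- `Hsp` is the real Hilbert space `ℓ²` of square-summable real sequences. -/
abbrev Hsp : Type := lp (fun _ : ℕ => ℝ) 2

lemma Sbnd (lam : ℕ → ℝ) (lam0 : ℝ) (hlam0 : 0 < lam0) (hlam : ∀ k, lam0 ≤ lam k)
    (S : ℝ → Hsp → Hsp)
    (hS : ∀ t : ℝ, 0 ≤ t → ∀ (x : Hsp) (k : ℕ), S t x k = Real.exp (-(lam k * t)) * x k)
    (r : ℝ) (hr : 0 ≤ r) (x : Hsp) : ‖S r x‖ ≤ ‖x‖ := by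
  have hp : (0:ℝ) < (2:ℝ≥0∞).toReal := by norm_num
  have hcoord : ∀ k : ℕ, ‖(S r x) k‖ ≤ ‖x k‖ := by
    intro k
    rw [hS r hr x k]
    have h1 : Real.exp (-(lam k * r)) ≤ 1 := by
      apply Real.exp_le_one_iff.2
      have : 0 ≤ lam k * r := mul_nonneg (le_trans hlam0.le (hlam k)) hr
      linarith
    have h0 : 0 ≤ Real.exp (-(lam k * r)) := (Real.exp_pos _).le
    rw [norm_mul, Real.norm_eq_abs (Real.exp _), abs_of_nonneg h0]
    calc Real.exp (-(lam k * r)) * ‖x k‖ ≤ 1 * ‖x k‖ :=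
          mul_le_mul_of_nonneg_right h1 (norm_nonneg _)
      _ = ‖x k‖ := one_mul _
  have h1 := lp.norm_rpow_eq_tsum hp (S r x)
  have h2 := lp.norm_rpow_eq_tsum hp x
  have hsum : ∑' k, ‖(S r x) k‖ ^ ((2:ℝ≥0∞).toReal) ≤ ∑' k, ‖x k‖ ^ ((2:ℝ≥0∞).toReal) := by
    apply Summable.tsum_le_tsum
    · intro k; exact Real.rpow_le_rpow (norm_nonneg _) (hcoord k) hp.le
    · exact (lp.memℓp (S r x)).summable hp
    · exact (lp.memℓp x).summable hp
  have : ‖S r x‖ ^ ((2:ℝ≥0∞).toReal) ≤ ‖x‖ ^ ((2:ℝ≥0∞).toReal) := by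
    rw [h1, h2]; exact hsum
  exact (Real.rpow_le_rpow_iff (norm_nonneg _) (norm_nonneg _) hp).1 this


/-- Proposition B.7: the second variation `ξ` of the averaged flow, solving
`ξ(t) = ∫₀ᵗ S(t−s)(Φ(s)(ξ(s)) + g(s)) ds` with `ξ(0) = 0`, `‖Φ(s)‖ ≤ K` and
`‖g(s)‖ ≤ K'(1 + s^{-a})‖h‖‖k‖` for `s > 0`, satisfies `‖ξ(t)‖ ≤ C‖h‖‖k‖` on `[0,T]`,
where `C` depends only on `T`, `a`, `K`, `K'`, `λ₀`. -/
theorem stmt15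
    (lam : ℕ → ℝ) (lam0 : ℝ) (hlam0 : 0 < lam0) (hlam : ∀ k, lam0 ≤ lam k)
    (S : ℝ → Hsp → Hsp)
    (hS : ∀ t : ℝ, 0 ≤ t → ∀ (x : Hsp) (k : ℕ), S t x k = Real.exp (-(lam k * t)) * x k)
    (K K' : ℝ) (hK : 0 ≤ K) (hK' : 0 ≤ K')
    (a : ℝ) (ha : a ∈ Set.Ioo (0:ℝ) (1/2))
    (T : ℝ) (hT : 0 < T) :
    ∃ C > 0, ∀ h k : Hsp,
      ∀ Φ : ℝ → Hsp →L[ℝ] Hsp, (∀ s : ℝ, 0 ≤ s → ‖Φ s‖ ≤ K) →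
      ∀ g : ℝ → Hsp, ContinuousOn g (Set.Ioi 0) →
      (∀ s : ℝ, 0 < s → ‖g s‖ ≤ K' * (1 + s ^ (-a)) * ‖h‖ * ‖k‖) →
      ∀ ξ : ℝ → Hsp, ContinuousOn ξ (Set.Ici 0) → ξ 0 = 0 →
      ContinuousOn (fun s => Φ s (ξ s)) (Set.Ici 0) →
      (∀ t : ℝ, 0 ≤ t → ξ t = ∫ s in (0:ℝ)..t, S (t - s) (Φ s (ξ s) + g s)) →
      ∀ t ∈ Set.Icc (0:ℝ) T, ‖ξ t‖ ≤ C * ‖h‖ * ‖k‖ := by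
  obtain ⟨ha0, ha2⟩ := ha
  have hna : (-1:ℝ) < -a := by linarith
  -- the fixed integral I
  set I : ℝ := ∫ s in (0:ℝ)..T, (1 + s ^ (-a)) with hIdef
  have hII : IntervalIntegrable (fun s : ℝ => 1 + s ^ (-a)) volume 0 T :=
    intervalIntegrable_const.add (intervalIntegral.intervalIntegrable_rpow' hna)
  have hInn : ∀ s : ℝ, 0 ≤ s → 0 ≤ 1 + s ^ (-a) := by
    intro s hs
    have := Real.rpow_nonneg hs (-a)
    linarith
  have hI0 : 0 ≤ I := by
    apply intervalIntegral.integral_nonneg hT.le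
    intro u hu; exact hInn u hu.1
  set gB : ℝ := gronwallBound 0 K (K' * I) T with hgBdef
  have hgB0 : 0 ≤ gB := by
    rw [hgBdef, gronwallBound]
    split_ifs with hK0
    · have : 0 ≤ K' * I := mul_nonneg hK' hI0
      nlinarith
    · have hKpos : 0 < K := lt_of_le_of_ne hK (Ne.symm hK0)
      have h1 : (1:ℝ) ≤ Real.exp (K * T) := by
        rw [← Real.exp_zero]
        exact Real.exp_le_exp.2 (by positivity)
      have : 0 ≤ K' * I / K := by positivity
      nlinarith
  refine ⟨K * gB + K' * I + 1, by positivity, ?_⟩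
  intro h k Φ hΦ g hgcont hg ξ hξcont hξ0 hΦξcont hmild t htT
  set m : ℝ := ‖h‖ * ‖k‖ with hmdef
  have hm0 : (0:ℝ) ≤ m := mul_nonneg (norm_nonneg _) (norm_nonneg _)
  set D : ℝ := K' * I * m with hDdef
  have hD0 : 0 ≤ D := mul_nonneg (mul_nonneg hK' hI0) hm0
  -- norm of xi is integrable / continuous
  set u : ℝ → ℝ := fun s => ‖ξ s‖ with hudef
  have hucont : ContinuousOn u (Set.Ici 0) := hξcont.norm
  have huint : ∀ x : ℝ, 0 ≤ x → IntervalIntegrable u volume 0 x := by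
    intro x hx
    apply ContinuousOn.intervalIntegrable
    apply hucont.mono
    rw [Set.uIcc_of_le hx]
    exact fun s hs => hs.1
  set v : ℝ → ℝ := fun x => ∫ s in (0:ℝ)..x, u s with hvdef
  have hv0 : ∀ x : ℝ, 0 ≤ x → 0 ≤ v x := by
    intro x hx
    exact intervalIntegral.integral_nonneg hx (fun s _ => norm_nonneg _)
  -- Step A : key integral inequality
  have key : ∀ t ∈ Set.Icc (0:ℝ) T, ‖ξ t‖ ≤ K * v t + D := by
    rintro t ⟨ht0, htT'⟩
    rw [hmild t ht0]
    set b : ℝ → ℝ := fun s => K * u s + K' * (1 + s ^ (-a)) * m with hbdef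
    have hbint : IntervalIntegrable b volume 0 t := by
      apply IntervalIntegrable.add
      · exact ((huint t ht0).const_mul K)
      · exact ((intervalIntegrable_const.add
          (intervalIntegral.intervalIntegrable_rpow' hna)).const_mul K').mul_const m
    have hb_nonneg : ∀ s ∈ Set.Icc (0:ℝ) t, 0 ≤ b s := by
      intro s hs
      have := hInn s hs.1
      have h1 : 0 ≤ K * u s := mul_nonneg hK (norm_nonneg _)
      have h2 : 0 ≤ K' * (1 + s ^ (-a)) * m := mul_nonneg (mul_nonneg hK' this) hm0
      simp only [hbdef]; linarith
    have hae : ∀ᵐ s ∂volume.restrict (Set.uIoc 0 t), ‖S (t - s) (Φ s (ξ s) + g s)‖ ≤ b s := by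
      rw [Set.uIoc_of_le ht0]
      filter_upwards [ae_restrict_mem measurableSet_Ioc] with s hs
      have hs0 : 0 < s := hs.1
      have hst : s ≤ t := hs.2
      calc ‖S (t - s) (Φ s (ξ s) + g s)‖
          ≤ ‖Φ s (ξ s) + g s‖ :=
            Sbnd lam lam0 hlam0 hlam S hS (t - s) (by linarith) _
        _ ≤ ‖Φ s (ξ s)‖ + ‖g s‖ := norm_add_le _ _
        _ ≤ K * u s + K' * (1 + s ^ (-a)) * m := by
            apply add_le_add
            · calc ‖Φ s (ξ s)‖ ≤ ‖Φ s‖ * ‖ξ s‖ := (Φ s).le_opNorm _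
                _ ≤ K * u s := mul_le_mul_of_nonneg_right (hΦ s hs0.le) (norm_nonneg _)
            · calc ‖g s‖ ≤ K' * (1 + s ^ (-a)) * ‖h‖ * ‖k‖ := hg s hs0
                _ = K' * (1 + s ^ (-a)) * m := by rw [hmdef, mul_assoc]
        _ = b s := rfl
    calc ‖∫ s in (0:ℝ)..t, S (t - s) (Φ s (ξ s) + g s)‖
        ≤ |∫ s in (0:ℝ)..t, b s| := intervalIntegral.norm_integral_le_abs_of_norm_le hae hbint
      _ = ∫ s in (0:ℝ)..t, b s := abs_of_nonneg (intervalIntegral.integral_nonneg ht0 hb_nonneg)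
      _ = (∫ s in (0:ℝ)..t, K * u s) + ∫ s in (0:ℝ)..t, K' * (1 + s ^ (-a)) * m := by
          apply intervalIntegral.integral_add ((huint t ht0).const_mul K)
          exact ((intervalIntegrable_const.add
            (intervalIntegral.intervalIntegrable_rpow' hna)).const_mul K').mul_const m
      _ ≤ K * v t + D := by
          apply add_le_add
          · rw [intervalIntegral.integral_const_mul]
          · rw [show (fun s : ℝ => K' * (1 + s ^ (-a)) * m) = fun s : ℝ => (K' * m) * (1 + s ^ (-a)) from funext fun s => by ring] at *
            rw [intervalIntegral.integral_const_mul]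
            have hmono : (∫ s in (0:ℝ)..t, (1 + s ^ (-a))) ≤ I := by
              apply intervalIntegral.integral_mono_interval le_rfl ht0 htT' _ hII
              filter_upwards [ae_restrict_mem measurableSet_Ioc] with s hs
              exact hInn s hs.1.le
            calc (K' * m) * ∫ s in (0:ℝ)..t, (1 + s ^ (-a)) ≤ (K' * m) * I :=
                  mul_le_mul_of_nonneg_left hmono (mul_nonneg hK' hm0)
              _ = D := by rw [hDdef]; ring
  -- Step B : Gronwall
  have hv_cont : ContinuousOn v (Set.Icc 0 T) := by
    have := intervalIntegral.continuousOn_primitive_interval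
      (f := u) (a := (0:ℝ)) (b := T) (μ := volume) ?_
    · rwa [Set.uIcc_of_le hT.le] at this
    · rw [Set.uIcc_of_le hT.le]
      exact (hucont.mono (fun s hs => hs.1)).integrableOn_compact isCompact_Icc
  have hv_deriv : ∀ x ∈ Set.Ico (0:ℝ) T, HasDerivWithinAt v (u x) (Set.Ici x) x := by
    intro x hx
    apply intervalIntegral.integral_hasDerivWithinAt_right (huint x hx.1)
      (t := Set.Ioi x)
    · exact ⟨Set.Ici 0, mem_of_superset self_mem_nhdsWithin
        (fun z hz => le_trans hx.1 (le_of_lt hz)),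
        hucont.aestronglyMeasurable measurableSet_Ici⟩
    · exact (hucont x hx.1).mono (fun z hz => le_trans hx.1 (le_of_lt hz))
  have hbound : ∀ x ∈ Set.Ico (0:ℝ) T, ‖u x‖ ≤ K * ‖v x‖ + D := by
    intro x hx
    have := key x ⟨hx.1, hx.2.le⟩
    rw [Real.norm_eq_abs, abs_of_nonneg (norm_nonneg _), Real.norm_eq_abs,
      abs_of_nonneg (hv0 x hx.1)]
    exact this
  have hGron := norm_le_gronwallBound_of_norm_deriv_right_le (δ := 0) (K := K) (ε := D)
    hv_cont hv_deriv (by simp [hvdef]) hbound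
  · -- conclude
    obtain ⟨ht0, htT'⟩ := htT
    have hvt := hGron t ⟨ht0, htT'⟩
    rw [sub_zero, Real.norm_eq_abs, abs_of_nonneg (hv0 t ht0)] at hvt
    have hgb_le : gronwallBound 0 K D t ≤ gB * m := by
      rw [hDdef, hgBdef, gronwallBound, gronwallBound]
      split_ifs with hK0
      · have : 0 ≤ K' * I := mul_nonneg hK' hI0
        nlinarith
      · have hKpos : 0 < K := lt_of_le_of_ne hK (Ne.symm hK0)
        have hexp : Real.exp (K * t) ≤ Real.exp (K * T) :=
          Real.exp_le_exp.2 (mul_le_mul_of_nonneg_left htT' hK)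
        have hexp1 : (1:ℝ) ≤ Real.exp (K * t) := by
          rw [← Real.exp_zero]; exact Real.exp_le_exp.2 (by positivity)
        have h1 : 0 ≤ K' * I / K := by positivity
        have h2 : K' * I * m / K = (K' * I / K) * m := by ring
        rw [h2]
        nlinarith [mul_le_mul_of_nonneg_left hexp (mul_nonneg h1 hm0)]
    have := key t ⟨ht0, htT'⟩
    calc ‖ξ t‖ ≤ K * v t + D := this
      _ ≤ K * (gB * m) + K' * I * m := by
          apply add_le_add_left
          exact mul_le_mul_of_nonneg_left (hvt.trans hgb_le) hK
      _ = (K * gB + K' * I) * m := by ring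
      _ ≤ (K * gB + K' * I + 1) * m := by nlinarith
      _ = (K * gB + K' * I + 1) * ‖h‖ * ‖k‖ := by rw [hmdef]; ring

end
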